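/- Let M ≥ 1, let f : {1,…,M} → ℂ, let δ > 0, and let θ₁,…,θ_K ∈ ℝ/ℤ be δ-separated (i.e. ‖θᵢ − θⱼ‖_{ℝ/ℤ} ≥ δ for i ≠ j). Then ∑_{j=1}^K |∑_{y=1}^M f(y)·e(y·θⱼ)|² ≤ C·(M + δ⁻¹)·∑_{y=1}^M |f(y)|² for an absolute constant C, where e(t) := e^{2πit}. -/

import Mathlib

open Complex Finset MeasureTheory intervalIntegral Real

noncomputable section LS

/-- The trigonometric polynomial with coefficients `g`. -/
def lsS (M : ℕ) (g : ℕ → ℂ) (t : ℝ) : ℂ :=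
  ∑ y ∈ Finset.Icc 1 M, g y * Complex.exp (2 * Real.pi * I * y * t)

/-- differentiated coefficients -/
def lsD (g : ℕ → ℂ) (y : ℕ) : ℂ := (2 * Real.pi * I * y) * g y

lemma lsS_continuous (M : ℕ) (g : ℕ → ℂ) : Continuous (lsS M g) := by
  unfold lsS
  apply continuous_finset_sum
  intro y _
  fun_prop

lemma lsS_hasDerivAt (M : ℕ) (g : ℕ → ℂ) (t : ℝ) :
    HasDerivAt (lsS M g) (lsS M (lsD g) t) t := by
  unfold lsS lsD
  apply HasDerivAt.fun_sum
  intro y _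
  have h0 : ∀ s : ℝ, (2 * Real.pi * I * y) * (s : ℂ) = 2 * ↑Real.pi * I * ↑y * ↑s := by
    intro s; ring
  have h1 : HasDerivAt (fun z : ℂ => Complex.exp (2 * Real.pi * I * y * z))
      (2 * Real.pi * I * y * Complex.exp (2 * Real.pi * I * y * t)) (t : ℂ) := by
    have ha : HasDerivAt (fun z : ℂ => 2 * Real.pi * I * y * z) (2 * Real.pi * I * y) (t : ℂ) := by
      simpa using (hasDerivAt_id (t : ℂ)).const_mul (2 * Real.pi * I * (y:ℂ))
    have hb := (Complex.hasDerivAt_exp (2 * Real.pi * I * y * t)).comp (t : ℂ) ha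
    simp only [Function.comp_def] at hb
    convert hb using 1
    all_goals first | ring | rfl
  have h2 := h1.comp_ofReal
  have h3 := h2.const_mul (g y)
  convert h3 using 1
  all_goals first | ring | rfl

lemma lsS_periodic (M : ℕ) (g : ℕ → ℂ) : Function.Periodic (lsS M g) 1 := by
  intro t
  unfold lsS
  refine Finset.sum_congr rfl fun y _ => ?_
  congr 1
  push_cast
  rw [mul_add, Complex.exp_add, mul_one]
  have : Complex.exp (2 * Real.pi * I * y) = 1 := by
    have := Complex.exp_int_mul_two_pi_mul_I (y : ℤ)
    push_cast at this
    rw [← this]; ring_nf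
  rw [this, mul_one]


lemma ls_orth (n : ℤ) :
    (∫ t in (0:ℝ)..1, Complex.exp (2 * Real.pi * I * n * t)) = if n = 0 then 1 else 0 := by
  rcases eq_or_ne n 0 with h | h
  · simp [h]
  · rw [if_neg h]
    have hc : (2 * Real.pi * I * n : ℂ) ≠ 0 := by
      simp [Complex.ext_iff, Real.pi_ne_zero, Complex.I_ne_zero, h]
    rw [integral_exp_mul_complex hc]
    have h1 : Complex.exp (2 * Real.pi * I * n * (1:ℝ)) = 1 := by
      have := Complex.exp_int_mul_two_pi_mul_I n
      rw [← this]; congr 1; push_cast; ring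
    have h0 : Complex.exp (2 * Real.pi * I * n * (0:ℝ)) = 1 := by
      norm_num
    rw [h1, h0]
    simp

lemma ls_exp_mul_conj (y z : ℕ) (t : ℝ) :
    Complex.exp (2 * Real.pi * I * y * t) * (starRingEnd ℂ) (Complex.exp (2 * Real.pi * I * z * t)) =
      Complex.exp (2 * Real.pi * I * ((y:ℤ) - (z:ℤ)) * t) := by
  rw [← Complex.exp_conj, ← Complex.exp_add]
  congr 1
  simp only [map_mul, Complex.conj_I, Complex.conj_ofNat, Complex.conj_ofReal]
  push_cast
  ring_nf
  simp [Complex.conj_ofReal]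

/-- Parseval: complex form -/
lemma ls_parseval_c (M : ℕ) (g : ℕ → ℂ) :
    (∫ t in (0:ℝ)..1, lsS M g t * (starRingEnd ℂ) (lsS M g t)) =
      ∑ y ∈ Finset.Icc 1 M, g y * (starRingEnd ℂ) (g y) := by
  have hexp : ∀ t : ℝ, lsS M g t * (starRingEnd ℂ) (lsS M g t) =
      ∑ y ∈ Finset.Icc 1 M, ∑ z ∈ Finset.Icc 1 M,
        (g y * (starRingEnd ℂ) (g z)) * Complex.exp (2 * Real.pi * I * ((y:ℤ) - (z:ℤ)) * t) := by
    intro t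
    unfold lsS
    rw [map_sum, Finset.sum_mul_sum]
    refine Finset.sum_congr rfl fun y _ => Finset.sum_congr rfl fun z _ => ?_
    rw [map_mul, ← ls_exp_mul_conj y z t]
    ring
  calc (∫ t in (0:ℝ)..1, lsS M g t * (starRingEnd ℂ) (lsS M g t))
      = ∫ t in (0:ℝ)..1, ∑ y ∈ Finset.Icc 1 M, ∑ z ∈ Finset.Icc 1 M,
          (g y * (starRingEnd ℂ) (g z)) * Complex.exp (2 * Real.pi * I * ((y:ℤ) - (z:ℤ)) * t) := by
        simp_rw [hexp]
    _ = ∑ y ∈ Finset.Icc 1 M, ∑ z ∈ Finset.Icc 1 M,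
          (g y * (starRingEnd ℂ) (g z)) * ∫ t in (0:ℝ)..1,
            Complex.exp (2 * Real.pi * I * ((y:ℤ) - (z:ℤ)) * t) := by
        rw [intervalIntegral.integral_finset_sum]
        · refine Finset.sum_congr rfl fun y _ => ?_
          rw [intervalIntegral.integral_finset_sum]
          · refine Finset.sum_congr rfl fun z _ => ?_
            exact intervalIntegral.integral_const_mul _ _
          · intro z _
            apply Continuous.intervalIntegrable
            fun_prop
        · intro y _
          apply continuous_finset_sum _ (fun z _ => by fun_prop) |>.intervalIntegrable
    _ = ∑ y ∈ Finset.Icc 1 M, ∑ z ∈ Finset.Icc 1 M,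
          (g y * (starRingEnd ℂ) (g z)) * (if y = z then 1 else 0) := by
        refine Finset.sum_congr rfl fun y _ => Finset.sum_congr rfl fun z _ => ?_
        congr 1
        have h := ls_orth ((y:ℤ) - (z:ℤ))
        push_cast at h ⊢
        rw [h]
        by_cases hyz : y = z <;> simp [hyz, sub_eq_zero]
    _ = ∑ y ∈ Finset.Icc 1 M, g y * (starRingEnd ℂ) (g y) := by
        refine Finset.sum_congr rfl fun y hy => ?_
        simp [mul_ite, Finset.sum_ite_eq, hy]

/-- Parseval: real form -/
lemma ls_parseval (M : ℕ) (g : ℕ → ℂ) :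
    (∫ t in (0:ℝ)..1, ‖lsS M g t‖ ^ 2) = ∑ y ∈ Finset.Icc 1 M, ‖g y‖ ^ 2 := by
  have h1 : ∀ z : ℂ, ‖z‖ ^ 2 = Complex.reCLM (z * (starRingEnd ℂ) z) := by
    intro z
    simp [Complex.mul_conj, Complex.normSq_eq_norm_sq, ← Complex.ofReal_pow]
  simp_rw [h1]
  rw [ContinuousLinearMap.intervalIntegral_comp_comm _ (by
    apply Continuous.intervalIntegrable
    exact ((lsS_continuous M g).mul (Complex.continuous_conj.comp (lsS_continuous M g))))]
  rw [ls_parseval_c, map_sum]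


def lsF (M : ℕ) (g : ℕ → ℂ) (t : ℝ) : ℝ := ‖lsS M g t‖ ^ 2

def lsF' (M : ℕ) (g : ℕ → ℂ) (t : ℝ) : ℝ :=
  2 * ((lsS M g t).re * (lsS M (lsD g) t).re + (lsS M g t).im * (lsS M (lsD g) t).im)

lemma lsF_continuous (M : ℕ) (g : ℕ → ℂ) : Continuous (lsF M g) := by
  exact ((lsS_continuous M g).norm).pow 2

lemma lsF'_continuous (M : ℕ) (g : ℕ → ℂ) : Continuous (lsF' M g) := by
  unfold lsF'
  have h1 := lsS_continuous M g
  have h2 := lsS_continuous M (lsD g)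
  fun_prop

lemma lsF_hasDerivAt (M : ℕ) (g : ℕ → ℂ) (t : ℝ) :
    HasDerivAt (lsF M g) (lsF' M g t) t := by
  have hS := lsS_hasDerivAt M g t
  have hre : HasDerivAt (fun u => (lsS M g u).re) ((lsS M (lsD g) t).re) t := by
    exact Complex.reCLM.hasFDerivAt.comp_hasDerivAt t hS
  have him : HasDerivAt (fun u => (lsS M g u).im) ((lsS M (lsD g) t).im) t := by
    exact Complex.imCLM.hasFDerivAt.comp_hasDerivAt t hS
  have key := (hre.mul hre).add (him.mul him)
  have hfun : lsF M g = fun u => (lsS M g u).re * (lsS M g u).re + (lsS M g u).im * (lsS M g u).im := by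
    funext u
    simp [lsF, ← Complex.normSq_eq_norm_sq, Complex.normSq_apply]
  have hd : lsF' M g t = (lsS M (lsD g) t).re * (lsS M g t).re +
      (lsS M g t).re * (lsS M (lsD g) t).re +
      ((lsS M (lsD g) t).im * (lsS M g t).im + (lsS M g t).im * (lsS M (lsD g) t).im) := by
    unfold lsF'; ring
  rw [hfun, hd]
  exact key

lemma lsF'_bound (M : ℕ) (g : ℕ → ℂ) (t : ℝ) :
    |lsF' M g t| ≤ 2 * ‖lsS M g t‖ * ‖lsS M (lsD g) t‖ := by
  set a := lsS M g t
  set b := lsS M (lsD g) t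
  have h1 : lsF' M g t = 2 * (a * (starRingEnd ℂ) b).re := by
    unfold lsF'
    simp only [Complex.mul_re, Complex.conj_re, Complex.conj_im]
    ring
  rw [h1, abs_mul, _root_.abs_two]
  have h2 : |(a * (starRingEnd ℂ) b).re| ≤ ‖a‖ * ‖b‖ := by
    calc |(a * (starRingEnd ℂ) b).re| ≤ ‖a * (starRingEnd ℂ) b‖ :=
          Complex.abs_re_le_norm _
      _ = ‖a‖ * ‖b‖ := by simp [map_mul]
  nlinarith [norm_nonneg a, norm_nonneg b]

lemma lsF_periodic (M : ℕ) (g : ℕ → ℂ) : Function.Periodic (lsF M g) 1 := by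
  intro t; unfold lsF; rw [lsS_periodic]

lemma ls_sobolev (M : ℕ) (g : ℕ → ℂ) {a b c : ℝ} (hab : a < b) (hc : c ∈ Set.Icc a b) :
    (b - a) * lsF M g c ≤ (∫ t in a..b, lsF M g t) + (b - a) * ∫ t in a..b, |lsF' M g t| := by
  have hFc : Continuous (lsF M g) := lsF_continuous M g
  have hF'c : Continuous (lsF' M g) := lsF'_continuous M g
  have hF'abs : Continuous fun t => |lsF' M g t| := hF'c.abs
  have key : ∀ t ∈ Set.Icc a b,
      lsF M g c ≤ lsF M g t + ∫ u in a..b, |lsF' M g u| := by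
    intro t ht
    have hftc : (∫ u in t..c, lsF' M g u) = lsF M g c - lsF M g t :=
      intervalIntegral.integral_eq_sub_of_hasDerivAt
        (fun u _ => lsF_hasDerivAt M g u) (hF'c.intervalIntegrable t c)
    have hb1 : |∫ u in t..c, lsF' M g u| ≤ |∫ u in t..c, (|lsF' M g u|)| := by
      simpa [Real.norm_eq_abs] using
        intervalIntegral.norm_integral_le_abs_integral_norm (f := lsF' M g) (a := t) (b := c) (μ := volume)
    have hb2 : |∫ u in t..c, (|lsF' M g u|)| ≤ ∫ u in a..b, |lsF' M g u| := by
      rcases le_total t c with h | h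
      · rw [_root_.abs_of_nonneg (intervalIntegral.integral_nonneg h (fun u _ => abs_nonneg _))]
        exact intervalIntegral.integral_mono_interval ht.1 h hc.2
          (Filter.Eventually.of_forall fun u => abs_nonneg _) (hF'abs.intervalIntegrable a b)
      · rw [intervalIntegral.integral_symm, abs_neg,
          _root_.abs_of_nonneg (intervalIntegral.integral_nonneg h (fun u _ => abs_nonneg _))]
        exact intervalIntegral.integral_mono_interval hc.1 h ht.2
          (Filter.Eventually.of_forall fun u => abs_nonneg _) (hF'abs.intervalIntegrable a b)
    have := (abs_le.mp ((hftc ▸ hb1).trans hb2)).2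
    linarith [this]
  have hint : (∫ t in a..b, lsF M g c) ≤
      ∫ t in a..b, (lsF M g t + ∫ u in a..b, |lsF' M g u|) := by
    apply intervalIntegral.integral_mono_on hab.le
    · exact intervalIntegrable_const
    · exact (hFc.add continuous_const).intervalIntegrable a b
    · exact key
  rw [intervalIntegral.integral_const, intervalIntegral.integral_add
    (hFc.intervalIntegrable a b) intervalIntegrable_const,
    intervalIntegral.integral_const] at hint
  simp only [smul_eq_mul] at hint
  linarith

end LS

open Complex in
/-- the analytic large sieve inequality. -/
theorem stmt8 : ∃ C : ℝ, 0 < C ∧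
    ∀ (M : ℕ), 1 ≤ M → ∀ (f : ℕ → ℂ) (δ : ℝ), 0 < δ →
    ∀ (K : ℕ) (θ : Fin K → ℝ),
      (∀ i j, i ≠ j → δ ≤ ‖((θ i - θ j : ℝ) : AddCircle (1 : ℝ))‖) →
      ∑ j : Fin K, ‖∑ y ∈ Finset.Icc 1 M, f y * Complex.exp (2 * Real.pi * I * y * θ j)‖ ^ 2 ≤
        C * ((M : ℝ) + δ⁻¹) * ∑ y ∈ Finset.Icc 1 M, ‖f y‖ ^ 2 := by
  refine ⟨30, by norm_num, ?_⟩
  intro M hM f δ hδ K θ hsep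
  have hM1 : (1:ℝ) ≤ M := by exact_mod_cast hM
  have hM0 : (0:ℝ) < M := by linarith
  set amg : ℝ := 2 * Real.pi * M with hamg_def
  have hamg : 0 < amg := by positivity
  set δ' : ℝ := min δ 2⁻¹ with hδ'_def
  have hδ'0 : 0 < δ' := lt_min hδ (by norm_num)
  have hδ'le : δ' ≤ 2⁻¹ := min_le_right _ _
  set SS : ℝ := ∑ y ∈ Finset.Icc 1 M, ‖f y‖^2 with hSS
  have hSS0 : 0 ≤ SS := Finset.sum_nonneg fun y _ => sq_nonneg _
  set G : ℝ → ℝ := fun t => (δ'⁻¹ + amg) * lsF M f t + amg⁻¹ * lsF M (lsD f) t with hG_def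
  have hFnn : ∀ (g : ℕ → ℂ) t, 0 ≤ lsF M g t := fun g t => sq_nonneg ‖lsS M g t‖
  have hGcont : Continuous G :=
    (continuous_const.mul (lsF_continuous M f)).add (continuous_const.mul (lsF_continuous M (lsD f)))
  have hGnn : ∀ t, 0 ≤ G t := fun t =>
    add_nonneg (mul_nonneg (by positivity) (hFnn f t)) (mul_nonneg (by positivity) (hFnn _ t))
  have hGper : Function.Periodic G 1 := by
    intro t
    simp only [hG_def]
    rw [lsF_periodic M f, lsF_periodic M (lsD f)]
  set c : Fin K → ℝ := fun j => Int.fract (θ j) with hc_def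
  have hc0 : ∀ j, 0 ≤ c j := fun j => Int.fract_nonneg _
  have hc1 : ∀ j, c j < 1 := fun j => Int.fract_lt_one _
  have hsep' : ∀ i j, i ≠ j → δ' ≤ |c i - c j| := by
    intro i j hij
    have h1 := hsep i j hij
    have hcoe : ((θ i - θ j : ℝ) : AddCircle (1:ℝ)) = ((c i - c j : ℝ) : AddCircle (1:ℝ)) := by
      rw [QuotientAddGroup.eq_iff_sub_mem]
      refine ⟨⌊θ i⌋ - ⌊θ j⌋, ?_⟩
      show ((⌊θ i⌋ - ⌊θ j⌋ : ℤ)) • (1:ℝ) = _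
      rw [zsmul_eq_mul, mul_one]
      push_cast
      simp only [hc_def, Int.fract]
      ring
    have h2 : ‖((c i - c j : ℝ) : AddCircle (1:ℝ))‖ ≤ |c i - c j| := by
      simpa [Real.norm_eq_abs] using
        (QuotientAddGroup.norm_mk_le_norm (S := AddSubgroup.zmultiples (1:ℝ)) (m := c i - c j))
    calc δ' ≤ δ := min_le_left _ _
      _ ≤ ‖((c i - c j : ℝ) : AddCircle (1:ℝ))‖ := hcoe ▸ h1
      _ ≤ |c i - c j| := h2
  have hptF' : ∀ t, |lsF' M f t| ≤ amg * lsF M f t + amg⁻¹ * lsF M (lsD f) t := by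
    intro t
    refine (lsF'_bound M f t).trans ?_
    have h := mul_nonneg (inv_nonneg.mpr hamg.le)
      (sq_nonneg (amg * ‖lsS M f t‖ - ‖lsS M (lsD f) t‖))
    have h2 : amg⁻¹ * amg = 1 := inv_mul_cancel₀ hamg.ne'
    have hF1 : lsF M f t = ‖lsS M f t‖^2 := rfl
    have hF2 : lsF M (lsD f) t = ‖lsS M (lsD f) t‖^2 := rfl
    rw [hF1, hF2]
    nlinarith [h, h2]
  have hkey : ∀ j, lsF M f (θ j) ≤ ∫ t in Set.Ioc (c j - δ'/2) (c j + δ'/2), G t := by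
    intro j
    have hFθ : lsF M f (θ j) = lsF M f (c j) := by
      have h := (lsF_periodic M f).sub_int_mul_eq (n := ⌊θ j⌋) (x := θ j)
      simp only [hc_def, Int.fract]
      rw [← h]
      norm_num
    set A := c j - δ'/2 with hA
    set B := c j + δ'/2 with hB
    have hAB : A < B := by rw [hA, hB]; linarith
    have hcmem : c j ∈ Set.Icc A B := ⟨by rw [hA]; linarith, by rw [hB]; linarith⟩
    have hsob := ls_sobolev M f hAB hcmem
    have hBA : B - A = δ' := by rw [hA, hB]; ring
    rw [hBA] at hsob
    have hi1 : (∫ t in A..B, |lsF' M f t|) ≤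
        ∫ t in A..B, (amg * lsF M f t + amg⁻¹ * lsF M (lsD f) t) := by
      apply intervalIntegral.integral_mono_on hAB.le
      · exact (lsF'_continuous M f).abs.intervalIntegrable A B
      · exact ((continuous_const.mul (lsF_continuous M f)).add
          (continuous_const.mul (lsF_continuous M (lsD f)))).intervalIntegrable A B
      · intro t _; exact hptF' t
    have hiadd : (∫ t in A..B, (amg * lsF M f t + amg⁻¹ * lsF M (lsD f) t)) =
        amg * (∫ t in A..B, lsF M f t) + amg⁻¹ * ∫ t in A..B, lsF M (lsD f) t := by
      rw [intervalIntegral.integral_add ((continuous_const.fun_mul (lsF_continuous M f)).intervalIntegrable A B)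
        ((continuous_const.fun_mul (lsF_continuous M (lsD f))).intervalIntegrable A B),
        intervalIntegral.integral_const_mul, intervalIntegral.integral_const_mul]
    have hGint : (∫ t in A..B, G t) = (δ'⁻¹ + amg) * (∫ t in A..B, lsF M f t) +
        amg⁻¹ * ∫ t in A..B, lsF M (lsD f) t := by
      simp only [hG_def]
      rw [intervalIntegral.integral_add ((continuous_const.fun_mul (lsF_continuous M f)).intervalIntegrable A B)
        ((continuous_const.fun_mul (lsF_continuous M (lsD f))).intervalIntegrable A B),
        intervalIntegral.integral_const_mul, intervalIntegral.integral_const_mul]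
    have hinv : δ' * δ'⁻¹ = 1 := mul_inv_cancel₀ hδ'0.ne'
    have hcore : lsF M f (c j) ≤ ∫ t in A..B, G t := by
      have h3 := mul_le_mul_of_nonneg_left hi1 hδ'0.le
      rw [hiadd] at h3
      have h4 : δ' * lsF M f (c j) ≤ δ' * ∫ t in A..B, G t := by
        rw [hGint]
        have e : δ' * ((δ'⁻¹ + amg) * (∫ t in A..B, lsF M f t) +
            amg⁻¹ * ∫ t in A..B, lsF M (lsD f) t) =
            (δ' * δ'⁻¹) * (∫ t in A..B, lsF M f t) +
            δ' * (amg * (∫ t in A..B, lsF M f t) + amg⁻¹ * ∫ t in A..B, lsF M (lsD f) t) := by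
          ring
        rw [e, hinv, one_mul]
        linarith [h3, hsob]
      exact le_of_mul_le_mul_left h4 hδ'0
    rw [hFθ]
    rwa [intervalIntegral.integral_of_le hAB.le] at hcore
  -- summation over disjoint intervals
  have hdisj : (↑(Finset.univ : Finset (Fin K)) : Set (Fin K)).Pairwise
      (Function.onFun Disjoint fun j => Set.Ioc (c j - δ'/2) (c j + δ'/2)) := by
    intro i _ j _ hij
    refine Set.disjoint_left.mpr ?_
    intro x hxi hxj
    simp only [Set.mem_Ioc] at hxi hxj
    have h := hsep' i j hij
    have : |c i - c j| < δ' := by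
      rw [abs_sub_lt_iff]
      constructor <;> linarith [hxi.1, hxi.2, hxj.1, hxj.2]
    linarith
  have hsum : ∑ j : Fin K, lsF M f (θ j) ≤ ∫ t in Set.Ioc (-2⁻¹ : ℝ) (3/2 : ℝ), G t := by
    calc ∑ j : Fin K, lsF M f (θ j)
        ≤ ∑ j : Fin K, ∫ t in Set.Ioc (c j - δ'/2) (c j + δ'/2), G t :=
          Finset.sum_le_sum fun j _ => hkey j
      _ = ∫ t in ⋃ j ∈ (Finset.univ : Finset (Fin K)), Set.Ioc (c j - δ'/2) (c j + δ'/2), G t :=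
          (integral_biUnion_finset Finset.univ (fun i _ => measurableSet_Ioc) hdisj
            (fun i _ => hGcont.integrableOn_Ioc)).symm
      _ ≤ ∫ t in Set.Ioc (-2⁻¹ : ℝ) (3/2 : ℝ), G t := by
          apply setIntegral_mono_set hGcont.integrableOn_Ioc
            (Filter.Eventually.of_forall fun t => hGnn t)
          apply HasSubset.Subset.eventuallyLE
          intro x hx
          simp only [Set.mem_iUnion, Set.mem_Ioc, Finset.mem_univ, exists_prop, true_and] at hx
          obtain ⟨j, hj1, hj2⟩ := hx
          refine ⟨?_, ?_⟩
          · have h0 := hc0 j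
            linarith [hj1]
          · have h1 := hc1 j
            linarith [hj2]
  -- periodicity: integral over length-2 window is twice one period
  have hper2 : (∫ t in Set.Ioc (-2⁻¹ : ℝ) (3/2 : ℝ), G t) = 2 * ∫ t in (0:ℝ)..1, G t := by
    rw [← intervalIntegral.integral_of_le (by norm_num : (-2⁻¹:ℝ) ≤ 3/2)]
    rw [← intervalIntegral.integral_add_adjacent_intervals (a := (-2⁻¹:ℝ)) (b := (2⁻¹:ℝ))
      (c := (3/2:ℝ)) (hGcont.intervalIntegrable _ _) (hGcont.intervalIntegrable _ _)]
    have e1 : (∫ t in (-2⁻¹ : ℝ)..(2⁻¹:ℝ), G t) = ∫ t in (0:ℝ)..1, G t := by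
      have h := hGper.intervalIntegral_add_eq (-2⁻¹ : ℝ) 0
      norm_num at h
      convert h using 2 <;> norm_num
    have e2 : (∫ t in (2⁻¹ : ℝ)..(3/2:ℝ), G t) = ∫ t in (0:ℝ)..1, G t := by
      have h := hGper.intervalIntegral_add_eq (2⁻¹ : ℝ) 0
      norm_num at h
      convert h using 2 <;> norm_num
    rw [e1, e2]; ring
  -- compute the period integral
  have hG01 : (∫ t in (0:ℝ)..1, G t) =
      (δ'⁻¹ + amg) * SS + amg⁻¹ * ∑ y ∈ Finset.Icc 1 M, ‖lsD f y‖^2 := by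
    simp only [hG_def]
    rw [intervalIntegral.integral_add ((continuous_const.fun_mul (lsF_continuous M f)).intervalIntegrable 0 1)
      ((continuous_const.fun_mul (lsF_continuous M (lsD f))).intervalIntegrable 0 1),
      intervalIntegral.integral_const_mul, intervalIntegral.integral_const_mul]
    have p1 : (∫ t in (0:ℝ)..1, lsF M f t) = SS := ls_parseval M f
    have p2 : (∫ t in (0:ℝ)..1, lsF M (lsD f) t) = ∑ y ∈ Finset.Icc 1 M, ‖lsD f y‖^2 :=
      ls_parseval M (lsD f)
    rw [p1, p2]
  have hSSD : ∑ y ∈ Finset.Icc 1 M, ‖lsD f y‖^2 ≤ amg^2 * SS := by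
    rw [hSS, Finset.mul_sum]
    apply Finset.sum_le_sum
    intro y hy
    have hyM : (y:ℝ) ≤ M := by exact_mod_cast (Finset.mem_Icc.mp hy).2
    have hy0 : (0:ℝ) ≤ y := Nat.cast_nonneg y
    have hnorm : ‖lsD f y‖ = (2*Real.pi*y) * ‖f y‖ := by
      unfold lsD
      rw [norm_mul]
      congr 1
      simp only [norm_mul, Complex.norm_real, Complex.norm_I,
        Complex.norm_natCast, Complex.norm_two, mul_one, Real.norm_eq_abs]
      rw [_root_.abs_of_nonneg Real.pi_pos.le]
    rw [hnorm, mul_pow]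
    have hsq : (2*Real.pi*y)^2 ≤ amg^2 := by
      apply pow_le_pow_left₀ (by positivity)
      rw [hamg_def]
      nlinarith [Real.pi_pos]
    nlinarith [sq_nonneg ‖f y‖, hsq]
  -- final arithmetic
  have hLHS : ∑ j : Fin K, ‖∑ y ∈ Finset.Icc 1 M, f y *
      Complex.exp (2 * Real.pi * I * y * θ j)‖ ^ 2 = ∑ j : Fin K, lsF M f (θ j) := rfl
  rw [hLHS]
  have hδ'inv : δ'⁻¹ ≤ δ⁻¹ + 2 := by
    rcases min_cases δ 2⁻¹ with ⟨h1, _⟩ | ⟨h1, _⟩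
    · rw [hδ'_def, h1]; linarith
    · rw [hδ'_def, h1]; norm_num
      positivity
  have hamginv : amg⁻¹ * amg^2 = amg := by field_simp
  have hδinv0 : 0 ≤ δ⁻¹ := by positivity
  calc ∑ j : Fin K, lsF M f (θ j)
      ≤ 2 * ((δ'⁻¹ + amg) * SS + amg⁻¹ * ∑ y ∈ Finset.Icc 1 M, ‖lsD f y‖^2) := by
        rw [← hG01]; rw [hper2] at hsum; exact hsum
    _ ≤ 2 * ((δ'⁻¹ + amg) * SS + amg * SS) := by
        have h1 : amg⁻¹ * ∑ y ∈ Finset.Icc 1 M, ‖lsD f y‖^2 ≤ amg * SS := by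
          calc amg⁻¹ * ∑ y ∈ Finset.Icc 1 M, ‖lsD f y‖^2 ≤ amg⁻¹ * (amg^2 * SS) :=
                mul_le_mul_of_nonneg_left hSSD (by positivity)
            _ = amg * SS := by rw [← mul_assoc, hamginv]
        linarith
    _ = (2*δ'⁻¹ + 4*amg) * SS := by ring
    _ ≤ (30 * ((M : ℝ) + δ⁻¹)) * SS := by
        apply mul_le_mul_of_nonneg_right _ hSS0
        have hπ : Real.pi < 3.15 := Real.pi_lt_d2
        rw [hamg_def]
        nlinarith [hπ, hM1, hδinv0, hδ'inv, Real.pi_pos]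
    _ = 30 * ((M : ℝ) + δ⁻¹) * SS := by ring
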